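/- Let n ≥ 7 be odd and let ν be the probability measure on the cyclic group ℤ_n with ν(1) = ν(−1) = 1/2 and ν(s) = 0 otherwise (the simple random walk on the circle). Then for every k ∈ ℕ, ‖ν^{⋆k} − π‖ ≥ (1/2) e^{−π² k / (2n²) − π⁴ k / (2n⁴)}. -/

import Mathlib

open Finset

/-- Convolution on a finite additive group: `(aconv μ ν) s = ∑ t, μ (s - t) * ν t`. -/
noncomputable def aconv {G : Type*} [AddGroup G] [Fintype G] (μ ν : G → ℝ) : G → ℝ :=
  fun s => ∑ t, μ (s - t) * ν t

/-- Convolution powers: `aconvPow ν 0 = δ_0`, `aconvPow ν (k+1) = aconv ν (aconvPow ν k)`. -/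
noncomputable def aconvPow {G : Type*} [AddGroup G] [Fintype G] [DecidableEq G]
    (ν : G → ℝ) : ℕ → G → ℝ
  | 0 => fun s => if s = 0 then 1 else 0
  | k + 1 => aconv ν (aconvPow ν k)

/-- Total variation distance. -/
noncomputable def tv {G : Type*} [Fintype G] (μ ν : G → ℝ) : ℝ :=
  (1 / 2) * ∑ s, |μ s - ν s|

/-- TV test function lower bound. -/
lemma tv_test {G : Type*} [Fintype G] (μ π' f : G → ℝ) (hf : ∀ s, |f s| ≤ 1) :
    |∑ s, f s * (μ s - π' s)| ≤ 2 * tv μ π' := by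
  rw [tv, show 2 * ((1/2) * ∑ s, |μ s - π' s|) = ∑ s, |μ s - π' s| by ring]
  calc |∑ s, f s * (μ s - π' s)| ≤ ∑ s, |f s * (μ s - π' s)| := Finset.abs_sum_le_sum_abs _ _
    _ ≤ ∑ s, |μ s - π' s| := by
      apply Finset.sum_le_sum; intro s _
      rw [abs_mul]
      exact mul_le_of_le_one_left (abs_nonneg _) (hf s)

/-- Analytic inequality `exp(-θ²/2-θ⁴/2) ≤ cos θ` for `0 ≤ θ ≤ 1/2`. -/
lemma exp_le_cos_aux (θ : ℝ) (h0 : 0 ≤ θ) (h1 : θ ≤ 1/2) :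
    Real.exp (-(θ^2/2) - θ^4/2) ≤ Real.cos θ := by
  have hx0 : (0:ℝ) ≤ θ^2/2 + θ^4/2 := by positivity
  have h2 : Real.exp (-(θ^2/2) - θ^4/2) = Real.exp (-(θ^2/2 + θ^4/2)) := by ring_nf
  rw [h2]
  have hlow : 1 - θ^2/2 - θ^4 * (5/96) ≤ Real.cos θ := by
    have h := Real.cos_bound (x := θ) (by rw [abs_of_nonneg h0]; linarith)
    rw [abs_of_nonneg h0] at h
    have := abs_sub_le_iff.mp h
    linarith [this.2]
  have he : Real.exp (-(θ^2/2 + θ^4/2)) ≤ 1/(1 + (θ^2/2 + θ^4/2)) := by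
    have h3 : (θ^2/2 + θ^4/2) + 1 ≤ Real.exp (θ^2/2 + θ^4/2) := Real.add_one_le_exp _
    rw [Real.exp_neg, inv_eq_one_div]
    exact one_div_le_one_div_of_le (by linarith) (by linarith)
  have h4 : 1/(1 + (θ^2/2 + θ^4/2)) ≤ 1 - (θ^2/2 + θ^4/2) + (θ^2/2 + θ^4/2)^2 := by
    rw [div_le_iff₀ (by linarith)]
    nlinarith [pow_nonneg hx0 3, hx0]
  have h6 : θ^2 ≤ 1/4 := by nlinarith
  have h7 : θ^6 ≤ θ^4 * (1/4) := by nlinarith [pow_nonneg h0 4]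
  have h8 : θ^8 ≤ θ^4 * (1/16) := by nlinarith [pow_nonneg h0 4, pow_nonneg h0 6]
  have hmid : 1 - (θ^2/2 + θ^4/2) + (θ^2/2 + θ^4/2)^2 ≤ 1 - θ^2/2 - θ^4 * (5/96) := by
    nlinarith [pow_nonneg h0 4]
  linarith

section Fourier
variable {n : ℕ} [NeZero n]

omit [NeZero n] in
lemma pow_mod_eq (ζ : ℂ) (hζ : ζ ^ n = 1) (m : ℕ) : ζ ^ (m % n) = ζ ^ m := by
  conv_rhs => rw [← Nat.div_add_mod m n, pow_add, pow_mul, hζ, one_pow, one_mul]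

lemma e_add (ζ : ℂ) (hζ : ζ ^ n = 1) (a b : ZMod n) :
    ζ ^ (a + b).val = ζ ^ a.val * ζ ^ b.val := by
  rw [ZMod.val_add, pow_mod_eq ζ hζ, pow_add]

lemma conv_fourier (ζ : ℂ) (hζ : ζ ^ n = 1) (μ ν' : ZMod n → ℝ) :
    ∑ s : ZMod n, ζ ^ s.val * (aconv ν' μ s : ℂ)
      = (∑ s : ZMod n, ζ ^ s.val * (ν' s : ℂ)) * (∑ s : ZMod n, ζ ^ s.val * (μ s : ℂ)) := by
  simp only [aconv]
  push_cast
  simp_rw [Finset.mul_sum]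
  rw [Finset.sum_comm]
  have key : ∀ t : ZMod n, ∑ x : ZMod n, ζ ^ x.val * ((ν' (x - t) : ℂ) * (μ t : ℂ))
      = (∑ u : ZMod n, ζ ^ u.val * (ν' u : ℂ)) * (ζ ^ t.val * (μ t : ℂ)) := by
    intro t
    rw [← Fintype.sum_equiv (Equiv.addRight t)
      (fun u => ζ ^ (u + t).val * ((ν' u : ℂ) * (μ t : ℂ)))
      (fun x => ζ ^ x.val * ((ν' (x - t) : ℂ) * (μ t : ℂ)))
      (by intro u; simp)]
    rw [Finset.sum_mul]
    apply Finset.sum_congr rfl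
    intro u _
    rw [e_add ζ hζ]
    ring
  simp_rw [key]

lemma pow_fourier (ζ : ℂ) (hζ : ζ ^ n = 1) (ν' : ZMod n → ℝ) (k : ℕ) :
    ∑ s : ZMod n, ζ ^ s.val * (aconvPow ν' k s : ℂ)
      = (∑ s : ZMod n, ζ ^ s.val * (ν' s : ℂ)) ^ k := by
  induction k with
  | zero =>
      simp only [aconvPow, pow_zero]
      rw [Finset.sum_eq_single 0]
      · simp
      · intro b _ hb; simp [hb]
      · simp
  | succ k ih =>
      rw [show aconvPow ν' (k+1) = aconv ν' (aconvPow ν' k) from rfl,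
        conv_fourier ζ hζ, ih, pow_succ]
      ring

lemma sum_e_zero (ζ : ℂ) (hζ : ζ ^ n = 1) (hζ1 : ζ ≠ 1) :
    ∑ s : ZMod n, ζ ^ s.val = 0 := by
  have h : ∑ s : ZMod n, ζ ^ s.val = ∑ i ∈ Finset.range n, ζ ^ i := by
    refine Finset.sum_nbij' (fun s => s.val) (fun i => (i : ZMod n)) ?_ ?_ ?_ ?_ ?_
    · intro s _; exact Finset.mem_range.mpr (ZMod.val_lt s)
    · intro i _; exact Finset.mem_univ _
    · intro s _; exact ZMod.natCast_rightInverse s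
    · intro i hi; exact ZMod.val_natCast_of_lt (Finset.mem_range.mp hi)
    · intro s _; rfl
  rw [h, geom_sum_eq hζ1, hζ, sub_self, zero_div]

end Fourier

/-- lower bound for the simple random walk on the circle `ℤ_n`, `n ≥ 7` odd:
for every `k`, `‖ν^{⋆k} − π‖ ≥ (1/2) e^{−π²k/(2n²) − π⁴k/(2n⁴)}`. -/
theorem simple_walk_circle_lower_bound
    (n : ℕ) [NeZero n] (hn : 7 ≤ n) (hodd : Odd n)
    (ν : ZMod n → ℝ)
    (hν : ν = fun s => if s = 1 ∨ s = -1 then (1 / 2 : ℝ) else 0)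
    (k : ℕ) :
    (1 / 2) * Real.exp (-(Real.pi ^ 2 * k) / (2 * (n : ℝ) ^ 2)
        - Real.pi ^ 4 * k / (2 * (n : ℝ) ^ 4))
      ≤ tv (aconvPow ν k) (fun _ => 1 / (n : ℝ)) := by
  have hπ := Real.pi_pos
  have hn0 : (0:ℝ) < n := by positivity
  have hn7 : (7:ℝ) ≤ n := by exact_mod_cast hn
  obtain ⟨m, hm⟩ := hodd
  have hmr : (n:ℝ) = 2*m + 1 := by exact_mod_cast hm
  set θ : ℝ := Real.pi / n with hθ
  set θ₀ : ℝ := Real.pi - θ with hθ₀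
  set ζ : ℂ := Complex.exp (θ₀ * Complex.I) with hζdef
  have hcan : (n:ℝ) * (Real.pi / n) = Real.pi := mul_div_cancel₀ _ (ne_of_gt hn0)
  have hθpos : 0 < θ := by positivity
  have hθle : θ ≤ Real.pi / 7 := by
    rw [hθ]
    exact div_le_div_of_nonneg_left (le_of_lt hπ) (by norm_num) hn7
  have hθhalf : θ ≤ 1/2 := by
    have : Real.pi < 3.15 := Real.pi_lt_d2
    calc θ ≤ Real.pi / 7 := hθle
      _ ≤ 1/2 := by linarith
  have hθ₀pos : 0 < θ₀ := by
    have : θ < Real.pi := by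
      calc θ ≤ Real.pi / 7 := hθle
        _ < Real.pi := by linarith
    simp [hθ₀]; linarith
  have hθ₀lt : θ₀ < 2 * Real.pi := by
    rw [hθ₀]; linarith
  have hr : (n:ℝ) * θ₀ = m * (2*Real.pi) := by
    rw [hθ₀, hθ, mul_sub, hcan, hmr]; ring
  have hζn : ζ ^ n = 1 := by
    rw [hζdef, ← Complex.exp_nat_mul]
    have hc : (n:ℂ) * ((θ₀:ℂ) * Complex.I) = (m:ℂ) * (2 * (Real.pi:ℂ) * Complex.I) := by
      calc (n:ℂ) * ((θ₀:ℂ) * Complex.I) = (((n:ℝ) * θ₀ : ℝ) : ℂ) * Complex.I := by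
            push_cast; ring
        _ = (((m:ℝ) * (2*Real.pi) : ℝ) : ℂ) * Complex.I := by rw [hr]
        _ = (m:ℂ) * (2 * (Real.pi:ℂ) * Complex.I) := by push_cast; ring
    rw [hc, Complex.exp_nat_mul_two_pi_mul_I]
  have hζ1 : ζ ≠ 1 := by
    intro h
    rw [hζdef, Complex.exp_eq_one_iff] at h
    obtain ⟨z, hz⟩ := h
    have hz' : ((θ₀:ℝ):ℂ) = (((z:ℝ) * (2*Real.pi) : ℝ):ℂ) := by
      have : (θ₀:ℂ) * Complex.I = ((z:ℝ) * (2*Real.pi) : ℝ) * Complex.I := by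
        rw [hz]; push_cast; ring
      exact mul_right_cancel₀ Complex.I_ne_zero this
    have hzr : θ₀ = (z:ℝ) * (2*Real.pi) := by exact_mod_cast hz'
    have hz0 : (0:ℝ) < z := by nlinarith
    have hz1 : (1:ℝ) ≤ z := by exact_mod_cast (by exact_mod_cast hz0 : (0:ℤ) < z)
    nlinarith
  haveI : Fact (1 < n) := ⟨by omega⟩
  have h1ne : (1 : ZMod n) ≠ -1 := by
    intro h
    have h2 : ((2:ℕ) : ZMod n) = 0 := by
      push_cast
      linear_combination h
    rw [ZMod.natCast_eq_zero_iff] at h2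
    have := Nat.le_of_dvd (by norm_num) h2
    omega
  -- the Fourier coefficient of ν
  have hL : ∑ s : ZMod n, ζ ^ s.val * (ν s : ℂ) = ((Real.cos θ₀ : ℝ) : ℂ) := by
    have hv1 : (1 : ZMod n).val = 1 := ZMod.val_one n
    have hvm : ζ ^ (-1 : ZMod n).val = Complex.exp (-((θ₀:ℂ) * Complex.I)) := by
      have h := e_add ζ hζn 1 (-1)
      rw [add_neg_cancel, ZMod.val_zero, pow_zero, hv1, pow_one] at h
      have hζne : ζ ≠ 0 := Complex.exp_ne_zero _
      rw [Complex.exp_neg, ← hζdef]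
      exact eq_inv_of_mul_eq_one_right h.symm
    have split : ∀ s : ZMod n, ζ ^ s.val * ((ν s : ℝ) : ℂ)
        = (if s = 1 then ζ ^ s.val * (1/2:ℂ) else 0)
          + (if s = -1 then ζ ^ s.val * (1/2:ℂ) else 0) := by
      intro s
      rw [hν]
      by_cases h1 : s = 1
      · subst h1
        simp [h1ne]
      · by_cases h2 : s = -1
        · subst h2
          simp [Ne.symm h1ne]
        · simp [h1, h2]
    rw [Finset.sum_congr rfl (fun s _ => split s), Finset.sum_add_distrib,
      Finset.sum_ite_eq' univ (1 : ZMod n), Finset.sum_ite_eq' univ (-1 : ZMod n)]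
    simp only [Finset.mem_univ, if_true]
    rw [hv1, pow_one, hvm, hζdef, Complex.ofReal_cos, Complex.cos]
    ring
  -- real-part consequences
  have hkey : ∑ s : ZMod n, (ζ ^ s.val).re * (aconvPow ν k s) = (Real.cos θ₀)^k := by
    have h := pow_fourier ζ hζn ν k
    rw [hL] at h
    have h' := congrArg Complex.re h
    rw [Complex.re_sum, ← Complex.ofReal_pow, Complex.ofReal_re] at h'
    rw [← h']
    apply Finset.sum_congr rfl
    intro s _
    simp [Complex.mul_re]
  have hzero : ∑ s : ZMod n, (ζ ^ s.val).re = 0 := by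
    have h := congrArg Complex.re (sum_e_zero ζ hζn hζ1)
    rw [Complex.re_sum] at h
    simpa using h
  have hfs : ∀ s : ZMod n, |(ζ ^ s.val).re| ≤ 1 := by
    intro s
    calc |(ζ ^ s.val).re| ≤ ‖ζ ^ s.val‖ := Complex.abs_re_le_norm _
      _ = 1 := by rw [norm_pow, hζdef, Complex.norm_exp_ofReal_mul_I, one_pow]
  have hsum : ∑ s : ZMod n, (ζ ^ s.val).re * (aconvPow ν k s - 1/(n:ℝ))
      = (Real.cos θ₀)^k := by
    simp_rw [mul_sub]
    rw [Finset.sum_sub_distrib, hkey, ← Finset.sum_mul, hzero, zero_mul, sub_zero]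
  have htv := tv_test (aconvPow ν k) (fun _ => 1/(n:ℝ)) (fun s => (ζ ^ s.val).re) hfs
  rw [hsum] at htv
  -- |cos θ₀ ^ k| = cos θ ^ k
  have hcosθ₀ : Real.cos θ₀ = - Real.cos θ := by rw [hθ₀, Real.cos_pi_sub]
  have hcosθnn : 0 ≤ Real.cos θ := by
    apply Real.cos_nonneg_of_mem_Icc
    constructor
    · linarith
    · calc θ ≤ Real.pi / 7 := hθle
        _ ≤ Real.pi / 2 := by linarith
  have habs : |(Real.cos θ₀)^k| = (Real.cos θ)^k := by
    rw [abs_pow, hcosθ₀, abs_neg, abs_of_nonneg hcosθnn]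
  rw [habs] at htv
  -- the exponential bound
  have hE : -(Real.pi ^ 2 * k) / (2 * (n : ℝ) ^ 2) - Real.pi ^ 4 * k / (2 * (n : ℝ) ^ 4)
      = (k:ℝ) * (-(θ^2/2) - θ^4/2) := by
    rw [hθ]
    field_simp
  have hexp : Real.exp (-(Real.pi ^ 2 * k) / (2 * (n : ℝ) ^ 2)
      - Real.pi ^ 4 * k / (2 * (n : ℝ) ^ 4)) ≤ (Real.cos θ)^k := by
    rw [hE, Real.exp_nat_mul]
    exact pow_le_pow_left₀ (Real.exp_nonneg _) (exp_le_cos_aux θ (le_of_lt hθpos) hθhalf) k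
  linarith
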